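/- arXiv:2308.12614 — 2 statements merged into one kernel-verified Lean document; each statement's English description precedes it below -/
import Mathlib

section
/- A bipartite graph B has Ferrers dimension at most 2 if and only if the rows and columns of its biadjacency matrix can be permuted independently so that no 0 entry has a 1 both below it (in the same column) and to its right (in the same row). -/
/-- A Ferrers bigraph: its biadjacency matrix contains no 2×2 permutation submatrix. -/
def IsFerrers {n m : ℕ} (F : Fin n → Fin m → Prop) : Prop :=
  ∀ x₁ x₂ : Fin n, ∀ y₁ y₂ : Fin m, F x₁ y₁ → F x₂ y₂ → F x₁ y₂ ∨ F x₂ y₁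

/-- `B` has Ferrers dimension at most 2: it is the intersection of two Ferrers bigraphs. -/
def FerrersDimAtMostTwo {n m : ℕ} (E : Fin n → Fin m → Prop) : Prop :=
  ∃ F₁ F₂ : Fin n → Fin m → Prop, IsFerrers F₁ ∧ IsFerrers F₂ ∧
    ∀ x y, E x y ↔ F₁ x y ∧ F₂ x y

/-- Rows and columns can be permuted independently so that no 0 entry has a 1 both
below it (same column) and to its right (same row). -/
def StairFreeOrdering {n m : ℕ} (E : Fin n → Fin m → Prop) : Prop :=
  ∃ σ : Equiv.Perm (Fin n), ∃ τ : Equiv.Perm (Fin m),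
    ∀ i j, ¬ E (σ i) (τ j) →
      (∀ j', j < j' → ¬ E (σ i) (τ j')) ∨ (∀ i', i < i' → ¬ E (σ i') (τ j))

/-- Neighborhoods of a Ferrers relation form a chain. -/
lemma ferrers_chain {n m : ℕ} {F : Fin n → Fin m → Prop} (hF : IsFerrers F)
    (x₁ x₂ : Fin n) : (∀ y, F x₁ y → F x₂ y) ∨ (∀ y, F x₂ y → F x₁ y) := by
  by_contra h
  push_neg at h
  obtain ⟨⟨y₁, hy₁, hy₁'⟩, ⟨y₂, hy₂, hy₂'⟩⟩ := h
  rcases hF x₁ x₂ y₁ y₂ hy₁ hy₂ with h | h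
  · exact hy₂' h
  · exact hy₁' h

/-- Column neighborhoods of a Ferrers relation form a chain. -/
lemma ferrers_chain_col {n m : ℕ} {F : Fin n → Fin m → Prop} (hF : IsFerrers F)
    (y₁ y₂ : Fin m) : (∀ x, F x y₁ → F x y₂) ∨ (∀ x, F x y₂ → F x y₁) := by
  have : IsFerrers (fun (y : Fin m) (x : Fin n) => F x y) := by
    intro y₁ y₂ x₁ x₂ h₁ h₂
    exact (hF x₁ x₂ y₁ y₂ h₁ h₂).symm
  exact ferrers_chain this y₁ y₂

lemma chain_card_le {α : Type*} [Fintype α] {P Q : α → Prop}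
    [DecidablePred P] [DecidablePred Q]
    (hchain : (∀ y, P y → Q y) ∨ (∀ y, Q y → P y))
    (hcard : (Finset.univ.filter Q).card ≤ (Finset.univ.filter P).card) :
    ∀ y, Q y → P y := by
  rcases hchain with h | h
  · have hsub : Finset.univ.filter P ⊆ Finset.univ.filter Q := by
      intro y hy
      simp only [Finset.mem_filter, Finset.mem_univ, true_and] at hy ⊢
      exact h y hy
    have := Finset.eq_of_subset_of_card_le hsub hcard
    intro y hy
    have : y ∈ Finset.univ.filter P := by
      rw [this]; simp [hy]
    simpa using this
  · exact h

theorem ferrers_dim_le_two_iff_stair_free {n m : ℕ} (E : Fin n → Fin m → Prop) :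
    FerrersDimAtMostTwo E ↔ StairFreeOrdering E := by
  classical
  constructor
  · rintro ⟨F₁, F₂, hF₁, hF₂, hE⟩
    set w₁ : Fin n → ℕᵒᵈ := fun x => OrderDual.toDual (Finset.univ.filter (fun y => F₁ x y)).card
      with hw₁
    set w₂ : Fin m → ℕᵒᵈ := fun y => OrderDual.toDual (Finset.univ.filter (fun x => F₂ x y)).card
      with hw₂
    refine ⟨Tuple.sort w₁, Tuple.sort w₂, ?_⟩
    set σ := Tuple.sort w₁
    set τ := Tuple.sort w₂
    have hσ : ∀ i i' : Fin n, i ≤ i' → ∀ y, F₁ (σ i') y → F₁ (σ i) y := by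
      intro i i' hii' y
      have hmono := Tuple.monotone_sort w₁ hii'
      simp only [Function.comp_apply, hw₁, OrderDual.toDual_le_toDual] at hmono
      exact fun h => chain_card_le (ferrers_chain hF₁ (σ i) (σ i')) hmono y h
    have hτ : ∀ j j' : Fin m, j ≤ j' → ∀ x, F₂ x (τ j') → F₂ x (τ j) := by
      intro j j' hjj' x
      have hmono := Tuple.monotone_sort w₂ hjj'
      simp only [Function.comp_apply, hw₂, OrderDual.toDual_le_toDual] at hmono
      exact fun h => chain_card_le (ferrers_chain_col hF₂ (τ j) (τ j')) hmono x h
    intro i j hij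
    by_cases h₁ : F₁ (σ i) (τ j)
    · left
      intro j' hjj' hE'
      have h₂' : F₂ (σ i) (τ j') := ((hE _ _).mp hE').2
      have h₂ : F₂ (σ i) (τ j) := hτ j j' hjj'.le _ h₂'
      exact hij ((hE _ _).mpr ⟨h₁, h₂⟩)
    · right
      intro i' hii' hE'
      have h₁' : F₁ (σ i') (τ j) := ((hE _ _).mp hE').1
      exact h₁ (hσ i i' hii'.le _ h₁')
  · rintro ⟨σ, τ, h⟩
    refine ⟨fun x y => ∃ j', τ.symm y ≤ j' ∧ E x (τ j'),
            fun x y => ∃ i', σ.symm x ≤ i' ∧ E (σ i') y, ?_, ?_, ?_⟩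
    · intro x₁ x₂ y₁ y₂ ⟨j₁, hj₁, he₁⟩ ⟨j₂, hj₂, he₂⟩
      rcases le_total (τ.symm y₂) (τ.symm y₁) with hle | hle
      · exact Or.inl ⟨j₁, hle.trans hj₁, he₁⟩
      · exact Or.inr ⟨j₂, hle.trans hj₂, he₂⟩
    · intro x₁ x₂ y₁ y₂ ⟨i₁, hi₁, he₁⟩ ⟨i₂, hi₂, he₂⟩
      rcases le_total (σ.symm x₁) (σ.symm x₂) with hle | hle
      · exact Or.inl ⟨i₂, hle.trans hi₂, he₂⟩
      · exact Or.inr ⟨i₁, hle.trans hi₁, he₁⟩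
    · intro x y
      constructor
      · intro hxy
        exact ⟨⟨τ.symm y, le_refl _, by simpa using hxy⟩,
               ⟨σ.symm x, le_refl _, by simpa using hxy⟩⟩
      · rintro ⟨⟨j', hj', he₁⟩, ⟨i', hi', he₂⟩⟩
        by_contra hxy
        have hE0 : ¬ E (σ (σ.symm x)) (τ (τ.symm y)) := by simpa using hxy
        have hj : τ.symm y < j' := by
          rcases lt_or_eq_of_le hj' with h' | h'
          · exact h'
          · exact absurd (by rwa [← h', Equiv.apply_symm_apply] at he₁) hxy
        have hi : σ.symm x < i' := by
          rcases lt_or_eq_of_le hi' with h' | h'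
          · exact h'
          · exact absurd (by rwa [← h', Equiv.apply_symm_apply] at he₂) hxy
        rcases h (σ.symm x) (τ.symm y) hE0 with hc | hc
        · exact hc j' hj (by simpa using he₁)
        · exact hc i' hi (by simpa using he₂)
end

section
/- A bipartite graph B is a signed-interval bigraph if and only if B has Ferrers dimension at most 2. -/
/-- `B` is a signed-interval bigraph: each vertex `v` gets a pair `(l v, r v)`
(positive interval if `l v ≤ r v`, negative if `l v > r v`), and `x y` is an edge
iff both intervals are positive and intersect, or the (reversed) negative interval
of one is contained in the positive interval of the other. -/
def IsSignedIntervalBigraph {n m : ℕ} (E : Fin n → Fin m → Prop) : Prop :=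
  ∃ lx rx : Fin n → ℝ, ∃ ly ry : Fin m → ℝ,
    ∀ x y, E x y ↔
      ((lx x ≤ rx x ∧ ly y ≤ ry y ∧ lx x ≤ ry y ∧ ly y ≤ rx x) ∨
       (rx x < lx x ∧ ly y ≤ ry y ∧ ly y ≤ rx x ∧ lx x ≤ ry y) ∨
       (ry y < ly y ∧ lx x ≤ rx x ∧ lx x ≤ ry y ∧ ly y ≤ rx x))

/-- The three-case signed-interval condition simplifies to two inequalities. -/
lemma signed_key (lx rx ly ry : ℝ) :
    ((lx ≤ rx ∧ ly ≤ ry ∧ lx ≤ ry ∧ ly ≤ rx) ∨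
     (rx < lx ∧ ly ≤ ry ∧ ly ≤ rx ∧ lx ≤ ry) ∨
     (ry < ly ∧ lx ≤ rx ∧ lx ≤ ry ∧ ly ≤ rx)) ↔ (lx ≤ ry ∧ ly ≤ rx) := by
  constructor
  · rintro (⟨_, _, h, h'⟩ | ⟨_, _, h', h⟩ | ⟨_, _, h, h'⟩) <;> exact ⟨h, h'⟩
  · rintro ⟨h1, h2⟩
    rcases le_or_gt lx rx with h3 | h3
    · rcases le_or_gt ly ry with h4 | h4
      · exact Or.inl ⟨h3, h4, h1, h2⟩
      · exact Or.inr (Or.inr ⟨h4, h3, h1, h2⟩)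
    · rcases le_or_gt ly ry with h4 | h4
      · exact Or.inr (Or.inl ⟨h3, h4, h2, h1⟩)
      · linarith

lemma ferrers_swap {n m : ℕ} (F : Fin n → Fin m → Prop) (hF : IsFerrers F) :
    IsFerrers (fun y x => F x y) := by
  intro y₁ y₂ x₁ x₂ h1 h2
  exact (hF x₁ x₂ y₁ y₂ h1 h2).symm

/-- Every Ferrers bigraph is a threshold relation. -/
lemma ferrers_rep {n m : ℕ} (F : Fin n → Fin m → Prop) (hF : IsFerrers F) :
    ∃ a : Fin n → ℝ, ∃ b : Fin m → ℝ, ∀ x y, F x y ↔ b y ≤ a x := by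
  classical
  set d : Fin n → ℕ := fun x => Set.ncard {y | F x y} with hd
  have hdm : ∀ x, d x ≤ m := by
    intro x
    have : Set.ncard {y | F x y} ≤ Set.ncard (Set.univ : Set (Fin m)) :=
      Set.ncard_le_ncard (Set.subset_univ _) Set.finite_univ
    simpa [Set.ncard_univ] using this
  have hmono : ∀ x x' y, F x y → d x ≤ d x' → F x' y := by
    intro x x' y hxy hle
    by_cases hsub : {y | F x y} ⊆ {y' | F x' y'}
    · exact hsub hxy
    · rw [Set.not_subset] at hsub
      obtain ⟨y₁, h1, h2⟩ := hsub
      have hsub' : {y' | F x' y'} ⊆ {y | F x y} := by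
        intro y₂ hy₂
        rcases hF x x' y₁ y₂ h1 hy₂ with h | h
        · exact h
        · exact absurd h h2
      have heq : {y' | F x' y'} = {y | F x y} :=
        Set.eq_of_subset_of_ncard_le hsub' hle (Set.toFinite _)
      exact (Set.ext_iff.mp heq y).mpr hxy
  set t : Fin m → ℕ := fun y =>
    if ∃ x, F x y then sInf (d '' {x | F x y}) else m + 1 with ht
  have key : ∀ x y, F x y ↔ t y ≤ d x := by
    intro x y
    constructor
    · intro hxy
      have hex : ∃ x', F x' y := ⟨x, hxy⟩
      simp only [ht, if_pos hex]
      exact Nat.sInf_le ⟨x, hxy, rfl⟩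
    · intro hle
      by_cases hne : ∃ x', F x' y
      · simp only [ht, if_pos hne] at hle
        have hnem : (d '' {x | F x y}).Nonempty := by
          obtain ⟨x', hx'⟩ := hne
          exact ⟨d x', x', hx', rfl⟩
        obtain ⟨x₀, hx₀, hdx₀⟩ := Nat.sInf_mem hnem
        exact hmono x₀ x y hx₀ (hdx₀ ▸ hle)
      · simp only [ht, if_neg hne] at hle
        exact absurd (le_trans hle (hdm x)) (by omega)
  refine ⟨fun x => (d x : ℝ), fun y => (t y : ℝ), fun x y => ?_⟩
  rw [key x y]
  exact Nat.cast_le.symm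

theorem signed_interval_bigraph_iff_ferrers_dim_le_two {n m : ℕ}
    (E : Fin n → Fin m → Prop) :
    IsSignedIntervalBigraph E ↔ FerrersDimAtMostTwo E := by
  constructor
  · rintro ⟨lx, rx, ly, ry, h⟩
    refine ⟨fun x y => lx x ≤ ry y, fun x y => ly y ≤ rx x, ?_, ?_, ?_⟩
    · intro x₁ x₂ y₁ y₂ h1 h2
      rcases le_total (lx x₁) (lx x₂) with hh | hh
      · exact Or.inl (le_trans hh h2)
      · exact Or.inr (le_trans hh h1)
    · intro x₁ x₂ y₁ y₂ h1 h2
      rcases le_total (ly y₁) (ly y₂) with hh | hh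
      · exact Or.inr (le_trans hh h2)
      · exact Or.inl (le_trans hh h1)
    · intro x y
      rw [h x y, signed_key]
  · rintro ⟨F₁, F₂, h1, h2, hE⟩
    obtain ⟨rx, ly, hrep1⟩ := ferrers_rep F₁ h1
    obtain ⟨ry, lx, hrep2⟩ := ferrers_rep (fun y x => F₂ x y) (ferrers_swap F₂ h2)
    refine ⟨lx, rx, ly, ry, fun x y => ?_⟩
    rw [signed_key, hE x y, hrep1 x y, hrep2 y x]
    exact and_comm
end
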